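/- Let L = ⊕_{n∈Z} L_n be a weakly Z-graded Lie algebra over a field K of characteristic 0 (homogeneous components possibly infinite-dimensional) such that U(L) is left Noetherian. Then L_n is finite-dimensional for every n ≠ 0. -/

import Mathlib

set_option linter.unusedSectionVars false

noncomputable section PBWVerma
open Finsupp

variable {K : Type*} [Field K] {L : Type*} [LieRing L] [LieAlgebra K L]
variable {ι : Type*} [LinearOrder ι]

/-- basis monomial of the big module -/
def VB (μ : Multiset ι) : Multiset ι →₀ K := Finsupp.single μ 1

section defs

variable (p q : Submodule K L) (hpq : IsCompl p q) (c : Module.Basis ι K q)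

/-- projection onto `q` along `p` -/
def projQ : L →ₗ[K] q := q.projectionOnto p hpq.symm

def coords : L →ₗ[K] (ι →₀ K) := (c.repr : q ≃ₗ[K] (ι →₀ K)).toLinearMap ∘ₗ projQ p q hpq

lemma coords_subtype (u : q) : coords p q hpq c (u : L) = c.repr u := by
  have h1 : projQ p q hpq (u : L) = u :=
    Submodule.projectionOnto_apply_left hpq.symm u
  simp [coords, h1]

lemma coords_eb (i : ι) : coords p q hpq c (c i : L) = Finsupp.single i 1 := by
  rw [coords_subtype]
  simp

lemma coords_p (a : L) (ha : a ∈ p) : coords p q hpq c a = 0 := by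
  have h1 : projQ p q hpq a = 0 :=
    Submodule.projectionOnto_apply_right hpq.symm ⟨a, ha⟩
  simp [coords, h1]

/-- `u ↦ Σ_i u_i · (i ::ₘ μ)` -/
def lsumTop (μ : Multiset ι) : (ι →₀ K) →ₗ[K] (Multiset ι →₀ K) :=
  Finsupp.lsum K fun i => LinearMap.toSpanSingleton K _ (VB (i ::ₘ μ))

lemma lsumTop_single (μ : Multiset ι) (i : ι) (a : K) :
    lsumTop μ (Finsupp.single i a) = a • VB (i ::ₘ μ) := by
  simp [lsumTop, LinearMap.toSpanSingleton_apply]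

def topMap (μ : Multiset ι) : L →ₗ[K] (Multiset ι →₀ K) :=
  (lsumTop μ) ∘ₗ coords p q hpq c

open Classical in
/-- restrict coordinates to indices `≤ j` -/
def filterCoordsLe (j : ι) : (ι →₀ K) →ₗ[K] (ι →₀ K) where
  toFun := Finsupp.filter (· ≤ j)
  map_add' _ _ := Finsupp.filter_add
  map_smul' m x := by
    ext i; by_cases h : i ≤ j <;> simp [Finsupp.filter_apply, h]

/-- the part of `z` spanned by basis vectors `e_i`, `i ≤ j` -/
def zGood (j : ι) : L →ₗ[K] L :=
  q.subtype ∘ₗ (c.repr.symm : (ι →₀ K) ≃ₗ[K] q).toLinearMap ∘ₗ filterCoordsLe j ∘ₗ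
    coords p q hpq c

def zBad (j : ι) : L →ₗ[K] L := LinearMap.id - zGood p q hpq c j

lemma zGood_add_zBad (j : ι) (z : L) :
    zGood p q hpq c j z + zBad p q hpq c j z = z := by
  simp [zBad]

lemma coords_zGood (j : ι) (z : L) :
    coords p q hpq c (zGood p q hpq c j z) =
      Finsupp.filter (· ≤ j) (coords p q hpq c z) := by
  classical
  rw [zGood]
  simp only [LinearMap.comp_apply]
  rw [Submodule.subtype_apply, coords_subtype]
  simp [filterCoordsLe]

lemma coords_zBad (j : ι) (z : L) :
    coords p q hpq c (zBad p q hpq c j z) =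
      Finsupp.filter (fun i => ¬ i ≤ j) (coords p q hpq c z) := by
  classical
  have h := Finsupp.filter_pos_add_filter_neg (coords p q hpq c z) (· ≤ j)
  have h2 : coords p q hpq c (zBad p q hpq c j z)
      = coords p q hpq c z - Finsupp.filter (· ≤ j) (coords p q hpq c z) := by
    simp only [zBad, LinearMap.sub_apply, LinearMap.id_apply, map_sub, coords_zGood]
  rw [h2]
  nth_rewrite 1 [← h]
  abel

/-- prepend `j` on all monomials -/
def cheap (j : ι) : (Multiset ι →₀ K) →ₗ[K] (Multiset ι →₀ K) :=
  Finsupp.lmapDomain K K (fun μ => j ::ₘ μ)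

lemma cheap_VB (j : ι) (μ : Multiset ι) :
    cheap j (VB μ) = (VB (j ::ₘ μ) : Multiset ι →₀ K) := by
  simp [cheap, VB, Finsupp.mapDomain_single]

open Classical in
/-- keep only monomials of degree `≤ r` -/
def lowP (r : ℕ) : (Multiset ι →₀ K) →ₗ[K] (Multiset ι →₀ K) where
  toFun := Finsupp.filter (fun μ => Multiset.card μ ≤ r)
  map_add' _ _ := Finsupp.filter_add
  map_smul' m x := by
    ext μ; by_cases h : Multiset.card μ ≤ r <;> simp [Finsupp.filter_apply, h]

def highP (r : ℕ) : (Multiset ι →₀ K) →ₗ[K] (Multiset ι →₀ K) := LinearMap.id - lowP r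

lemma lowP_VB (r : ℕ) (μ : Multiset ι) :
    lowP r (VB μ : Multiset ι →₀ K) = if Multiset.card μ ≤ r then VB μ else 0 := by
  classical
  by_cases h : Multiset.card μ ≤ r <;>
    simp [lowP, VB, h, Finsupp.filter_single_of_pos, Finsupp.filter_single_of_neg]

lemma highP_VB (r : ℕ) (μ : Multiset ι) :
    highP r (VB μ : Multiset ι →₀ K) = if Multiset.card μ ≤ r then 0 else VB μ := by
  by_cases h : Multiset.card μ ≤ r <;> simp [highP, lowP_VB, h]

/-- right bracket by `y` as a linear map -/
def adR (y : L) : L →ₗ[K] L where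
  toFun z := ⁅z, y⁆
  map_add' a b := add_lie a b y
  map_smul' m x := smul_lie m x y

@[simp] lemma adR_apply (y z : L) : adR (K := K) y z = ⁅z, y⁆ := rfl

@[simp] lemma filterCoordsLe_apply (j : ι) (u : ι →₀ K) :
    filterCoordsLe (K := K) j u = Finsupp.filter (· ≤ j) u := rfl

/-- build a `z`-linear action from a family of per-monomial `z`-linear values -/
def mkAct (V : Multiset ι → (L →ₗ[K] (Multiset ι →₀ K))) :
    L →ₗ[K] (Multiset ι →₀ K) →ₗ[K] (Multiset ι →₀ K) where
  toFun z := Finsupp.lsum K fun μ => LinearMap.toSpanSingleton K _ (V μ z)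
  map_add' z w := by
    apply Finsupp.lhom_ext
    intro μ b
    simp [LinearMap.toSpanSingleton_apply, smul_add]
  map_smul' m z := by
    apply Finsupp.lhom_ext
    intro μ b
    simp [LinearMap.toSpanSingleton_apply, smul_comm b m]

lemma mkAct_VB (V : Multiset ι → (L →ₗ[K] (Multiset ι →₀ K))) (z : L) (μ : Multiset ι) :
    mkAct V z (VB μ) = V μ z := by
  simp [mkAct, VB, LinearMap.toSpanSingleton_apply]

end defs

lemma VB_mem_lowSub {r : ℕ} {μ : Multiset ι} (h : Multiset.card μ ≤ r) :
    (VB μ : Multiset ι →₀ K) ∈ Finsupp.supported K K {μ : Multiset ι | Multiset.card μ ≤ r} :=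
  Finsupp.single_mem_supported K 1 h

/-- two linear maps agreeing on the basis monomials in the support agree -/
lemma ext_on_support {N : Type*} [AddCommGroup N] [Module K N]
    (f g : (Multiset ι →₀ K) →ₗ[K] N) (v : Multiset ι →₀ K)
    (h : ∀ μ ∈ v.support, f (VB μ) = g (VB μ)) : f v = g v := by
  classical
  have hv : v = v.sum (fun μ a => a • (VB μ : Multiset ι →₀ K)) := by
    conv_lhs => rw [← Finsupp.sum_single v]
    apply Finsupp.sum_congr
    intro μ _
    simp [VB, Finsupp.smul_single]
  rw [hv, map_finsuppSum, map_finsuppSum]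
  apply Finsupp.sum_congr
  intro μ hμ
  simp [h μ hμ]

/-- membership of image under a linear map, monomial-wise -/
lemma map_mem_of_support {N : Type*} [AddCommGroup N] [Module K N]
    (f : (Multiset ι →₀ K) →ₗ[K] N) (S : Submodule K N) (v : Multiset ι →₀ K)
    (h : ∀ μ ∈ v.support, f (VB μ) ∈ S) : f v ∈ S := by
  classical
  have hv : f v = v.sum (fun μ a => a • f (VB μ)) := by
    conv_lhs => rw [← Finsupp.sum_single v]
    rw [map_finsuppSum]
    apply Finsupp.sum_congr
    intro μ _
    rw [← map_smul]
    congr 1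
    simp [VB, Finsupp.smul_single]
  rw [hv]
  exact Submodule.sum_mem S fun μ hμ => Submodule.smul_mem S _ (h μ hμ)

section defs2

variable {μ : Multiset ι}

lemma lowP_of_low {r : ℕ} {v : Multiset ι →₀ K}
    (hv : ∀ μ ∈ v.support, Multiset.card μ ≤ r) : lowP r v = v := by
  apply ext_on_support (lowP r) LinearMap.id v
  intro μ hμ
  simp [lowP_VB, hv μ hμ]

lemma highP_of_low {r : ℕ} {v : Multiset ι →₀ K}
    (hv : ∀ μ ∈ v.support, Multiset.card μ ≤ r) : highP r v = 0 := by
  simp [highP, lowP_of_low hv]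

lemma support_lowP {r : ℕ} (v : Multiset ι →₀ K) :
    ∀ μ ∈ (lowP r v).support, Multiset.card μ ≤ r := by
  classical
  intro μ hμ
  simp only [lowP, LinearMap.coe_mk, AddHom.coe_mk, Finsupp.support_filter,
    Finset.mem_filter] at hμ
  exact hμ.2

lemma toFinset_nonempty_of_ne (h : μ ≠ 0) : μ.toFinset.Nonempty := by
  rcases Multiset.exists_mem_of_ne_zero h with ⟨a, ha⟩
  exact ⟨a, Multiset.mem_toFinset.2 ha⟩

def minOf (μ : Multiset ι) (h : μ ≠ 0) : ι := μ.toFinset.min' (toFinset_nonempty_of_ne h)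

lemma minOf_mem (h : μ ≠ 0) : minOf μ h ∈ μ :=
  Multiset.mem_toFinset.1 (μ.toFinset.min'_mem _)

lemma minOf_le (h : μ ≠ 0) {l : ι} (hl : l ∈ μ) : minOf μ h ≤ l :=
  μ.toFinset.min'_le l (Multiset.mem_toFinset.2 hl)

lemma cons_ne_zero' (i : ι) (μ : Multiset ι) : i ::ₘ μ ≠ 0 := by
  simp [← Multiset.card_pos]

lemma minOf_cons (i : ι) (μ : Multiset ι) (hi : ∀ l ∈ μ, i ≤ l) :
    minOf (i ::ₘ μ) (cons_ne_zero' i μ) = i := by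
  apply le_antisymm
  · exact minOf_le _ (Multiset.mem_cons_self i μ)
  · have h := minOf_mem (μ := i ::ₘ μ) (cons_ne_zero' i μ)
    rcases Multiset.mem_cons.1 h with h' | h'
    · exact le_of_eq h'.symm
    · exact hi _ h'

end defs2

section stagedef

variable (p q : Submodule K L) (hpq : IsCompl p q) (c : Module.Basis ι K q)

/-- the staged action: `stage r` is the correct action on monomials of degree `≤ r` -/
def stage : ℕ → L →ₗ[K] (Multiset ι →₀ K) →ₗ[K] (Multiset ι →₀ K)
  | 0 => mkAct fun μ => if μ = 0 then topMap p q hpq c 0 else 0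
  | (r+1) => mkAct fun μ =>
      if Multiset.card μ ≤ r then (stage r).flip (VB μ)
      else if hc2 : Multiset.card μ = r + 1 then
        have hne : μ ≠ 0 := by
          intro h
          rw [h] at hc2
          simp at hc2
        let j := minOf μ hne
        let μ' := μ.erase j
        (lsumTop μ) ∘ₗ (filterCoordsLe j) ∘ₗ (coords p q hpq c)
        + (((cheap j) ∘ₗ (highP r) + (stage r (c j : L)) ∘ₗ (lowP r)) ∘ₗ
            ((stage r).flip (VB μ'))) ∘ₗ (zBad p q hpq c j)
        + ((stage r).flip (VB μ')) ∘ₗ (adR (c j : L)) ∘ₗ (zBad p q hpq c j)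
      else 0

/-- the action -/
def FF : L →ₗ[K] (Multiset ι →₀ K) →ₗ[K] (Multiset ι →₀ K) :=
  mkAct fun μ => (stage p q hpq c (Multiset.card μ)).flip (VB μ)

lemma FF_VB (z : L) (μ : Multiset ι) :
    FF p q hpq c z (VB μ) = stage p q hpq c (Multiset.card μ) z (VB μ) := by
  rw [FF, mkAct_VB]
  rfl

lemma stage_succ_low {r : ℕ} {μ : Multiset ι} (h : Multiset.card μ ≤ r) (z : L) :
    stage p q hpq c (r+1) z (VB μ) = stage p q hpq c r z (VB μ) := by
  rw [stage, mkAct_VB, if_pos h]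
  rfl

lemma stage_eq_FF {r : ℕ} {μ : Multiset ι} (h : Multiset.card μ ≤ r) (z : L) :
    stage p q hpq c r z (VB μ) = FF p q hpq c z (VB μ) := by
  induction r with
  | zero =>
    rw [FF_VB]
    have : Multiset.card μ = 0 := le_antisymm h (Nat.zero_le _)
    rw [this]
  | succ r ih =>
    rcases Nat.lt_or_ge (Multiset.card μ) (r+1) with h' | h'
    · rw [stage_succ_low p q hpq c (Nat.lt_succ_iff.1 h'), ih (Nat.lt_succ_iff.1 h')]
    · have : Multiset.card μ = r + 1 := le_antisymm h h'
      rw [FF_VB, this]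

lemma stage_eq_FF_low {r : ℕ} {v : Multiset ι →₀ K}
    (hv : ∀ μ ∈ v.support, Multiset.card μ ≤ r) (z : L) :
    stage p q hpq c r z v = FF p q hpq c z v := by
  apply ext_on_support _ _ v
  intro μ hμ
  exact stage_eq_FF p q hpq c (hv μ hμ) z

lemma FF_vac (z : L) : FF p q hpq c z (VB 0) = topMap p q hpq c 0 z := by
  rw [FF_VB]
  show stage p q hpq c 0 z (VB 0) = _
  rw [stage, mkAct_VB, if_pos rfl]

/-- the fundamental unfolding of the recursion -/
lemma FF_step (z : L) (μ : Multiset ι) (hne : μ ≠ 0) :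
    FF p q hpq c z (VB μ) =
      lsumTop μ (Finsupp.filter (· ≤ minOf μ hne) (coords p q hpq c z))
      + cheap (minOf μ hne) (highP (Multiset.card μ - 1)
          (FF p q hpq c (zBad p q hpq c (minOf μ hne) z) (VB (μ.erase (minOf μ hne)))))
      + FF p q hpq c (c (minOf μ hne) : L) (lowP (Multiset.card μ - 1)
          (FF p q hpq c (zBad p q hpq c (minOf μ hne) z) (VB (μ.erase (minOf μ hne)))))
      + FF p q hpq c ⁅zBad p q hpq c (minOf μ hne) z, (c (minOf μ hne) : L)⁆
          (VB (μ.erase (minOf μ hne))) := by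
  classical
  have hcard : Multiset.card μ = (Multiset.card μ - 1) + 1 := by
    have : 0 < Multiset.card μ := Multiset.card_pos.2 hne
    omega
  set r := Multiset.card μ - 1 with hr
  have hcard' : Multiset.card (μ.erase (minOf μ hne)) = r := by
    rw [Multiset.card_erase_of_mem (minOf_mem hne), hcard]
    rfl
  rw [FF_VB, hcard]
  rw [stage, mkAct_VB]
  rw [if_neg (by omega), dif_pos (by omega)]
  have hs1 : ∀ w : L, stage p q hpq c r w (VB (μ.erase (minOf μ hne)))
      = FF p q hpq c w (VB (μ.erase (minOf μ hne))) := fun w =>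
    stage_eq_FF p q hpq c (le_of_eq hcard') w
  simp only [LinearMap.add_apply, LinearMap.comp_apply, LinearMap.flip_apply, hs1]
  rw [stage_eq_FF_low p q hpq c (support_lowP _)]
  simp only [adR_apply, filterCoordsLe_apply]
  abel

end stagedef

lemma lsumTop_apply' (μ : Multiset ι) (u : ι →₀ K) :
    lsumTop μ u = u.sum fun i a => a • (VB (i ::ₘ μ) : Multiset ι →₀ K) := by
  rw [lsumTop, Finsupp.lsum_apply]
  apply Finsupp.sum_congr
  intro i _
  simp [LinearMap.toSpanSingleton_apply]

/-- degree-bounded part of the module -/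
def lowM (r : ℕ) : Submodule K (Multiset ι →₀ K) :=
  Finsupp.supported K K {μ : Multiset ι | Multiset.card μ ≤ r}

lemma VB_mem_lowM {r : ℕ} {μ : Multiset ι} (h : Multiset.card μ ≤ r) :
    (VB μ : Multiset ι →₀ K) ∈ lowM (K := K) r :=
  Finsupp.single_mem_supported K 1 h

lemma lowM_mono {r s : ℕ} (h : r ≤ s) : lowM (K := K) (ι := ι) r ≤ lowM s :=
  Finsupp.supported_mono (fun μ hμ => le_trans hμ h)

lemma card_le_of_mem_lowM {r : ℕ} {v : Multiset ι →₀ K} (hv : v ∈ lowM (K := K) r)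
    {μ : Multiset ι} (hμ : μ ∈ v.support) : Multiset.card μ ≤ r :=
  (Finsupp.mem_supported K v).1 hv hμ

lemma lsumTop_mem_lowM {r : ℕ} (μ : Multiset ι) (u : ι →₀ K)
    (h : Multiset.card μ + 1 ≤ r) : lsumTop μ u ∈ lowM (K := K) r := by
  rw [lsumTop_apply']
  apply Submodule.sum_mem
  intro i _
  exact Submodule.smul_mem _ _ (VB_mem_lowM (by simp [h]))

lemma highP_lsumTop {r : ℕ} (μ : Multiset ι) (u : ι →₀ K)
    (h : r ≤ Multiset.card μ) : highP r (lsumTop μ u) = lsumTop μ u := by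
  rw [lsumTop_apply', map_finsuppSum]
  apply Finsupp.sum_congr
  intro i _
  rw [map_smul, highP_VB, if_neg (by simp; omega)]

lemma lowP_lsumTop {r : ℕ} (μ : Multiset ι) (u : ι →₀ K)
    (h : r ≤ Multiset.card μ) : lowP r (lsumTop μ u) = 0 := by
  have h1 := highP_lsumTop (K := K) (r := r) μ u h
  rw [highP, LinearMap.sub_apply, LinearMap.id_apply, sub_eq_self] at h1
  exact h1

lemma highP_of_mem_lowM {r : ℕ} {v : Multiset ι →₀ K} (hv : v ∈ lowM (K := K) r) :
    highP r v = 0 :=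
  highP_of_low (fun μ hμ => card_le_of_mem_lowM hv hμ)

lemma lowP_of_mem_lowM {r : ℕ} {v : Multiset ι →₀ K} (hv : v ∈ lowM (K := K) r) :
    lowP r v = v :=
  lowP_of_low (fun μ hμ => card_le_of_mem_lowM hv hμ)

section mainprops

variable (p q : Submodule K L) (hpq : IsCompl p q) (c : Module.Basis ι K q)

lemma cheap_lsumTop {j : ι} {μ' μ : Multiset ι} (hjμ : j ::ₘ μ' = μ) (u : ι →₀ K) :
    cheap j (lsumTop μ' u) = lsumTop μ u := by
  rw [lsumTop_apply', lsumTop_apply', map_finsuppSum]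
  apply Finsupp.sum_congr
  intro i _
  rw [map_smul, cheap_VB]
  congr 2
  rw [← hjμ, Multiset.cons_swap]

lemma topMap_mem_lowM {r : ℕ} (μ : Multiset ι) (z : L)
    (h : Multiset.card μ + 1 ≤ r) : topMap p q hpq c μ z ∈ lowM (K := K) r :=
  lsumTop_mem_lowM μ _ h

/-- Property (P): the action of `z` on a monomial is `Σᵢ zᵢ (i ::ₘ μ)` plus lower terms. -/
lemma topPart : ∀ (d : ℕ) (μ : Multiset ι), Multiset.card μ = d → ∀ z : L,
    FF p q hpq c z (VB μ) - topMap p q hpq c μ z ∈ lowM (K := K) d := by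
  intro d
  induction d using Nat.strong_induction_on with
  | _ d ih =>
    rcases d with _ | r
    · intro μ hμ z
      have hμ0 : μ = 0 := Multiset.card_eq_zero.1 hμ
      subst hμ0
      rw [FF_vac]
      simp
    · intro μ hμcard z
      have hne : μ ≠ 0 := by
        intro h0
        rw [h0] at hμcard
        simp at hμcard
      set j := minOf μ hne with hj
      set μ' := μ.erase j with hμ'
      have hjmem : j ∈ μ := minOf_mem hne
      have hcons : j ::ₘ μ' = μ := Multiset.cons_erase hjmem
      have hμ'card : Multiset.card μ' = r := by
        rw [hμ', Multiset.card_erase_of_mem hjmem, hμcard]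
        rfl
      have hr1 : Multiset.card μ - 1 = r := by omega
      set zb := zBad p q hpq c j z with hzb
      -- induction hypothesis at μ'
      have IH1 : FF p q hpq c zb (VB μ') - topMap p q hpq c μ' zb ∈ lowM (K := K) r :=
        ih r (by omega) μ' hμ'card zb
      set E := FF p q hpq c zb (VB μ') - topMap p q hpq c μ' zb with hE
      have hFFzb : FF p q hpq c zb (VB μ') = topMap p q hpq c μ' zb + E := by
        rw [hE]; abel
      -- split high/low
      have hhigh : highP r (FF p q hpq c zb (VB μ')) = topMap p q hpq c μ' zb := by
        rw [hFFzb, map_add, highP_of_mem_lowM IH1, add_zero, topMap,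
          LinearMap.comp_apply, highP_lsumTop _ _ (le_of_eq hμ'card.symm)]
      have hlow : lowP r (FF p q hpq c zb (VB μ')) = E := by
        rw [hFFzb, map_add, lowP_of_mem_lowM IH1, topMap, LinearMap.comp_apply,
          lowP_lsumTop _ _ (le_of_eq hμ'card.symm), zero_add]
      rw [FF_step p q hpq c z μ hne, ← hj, ← hμ', hr1, hhigh, hlow]
      -- first two terms assemble into topMap μ z
      have hassemble : lsumTop μ (Finsupp.filter (· ≤ j) (coords p q hpq c z))
          + cheap j (topMap p q hpq c μ' zb) = topMap p q hpq c μ z := by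
        rw [topMap, LinearMap.comp_apply, cheap_lsumTop hcons, hzb, coords_zBad,
          topMap, LinearMap.comp_apply, ← map_add]
        congr 1
        exact Finsupp.filter_pos_add_filter_neg _ _
      have final : lsumTop μ (Finsupp.filter (· ≤ j) (coords p q hpq c z))
          + cheap j (topMap p q hpq c μ' zb)
          + FF p q hpq c (c j : L) E
          + FF p q hpq c ⁅zb, (c j : L)⁆ (VB μ')
          - topMap p q hpq c μ z
          = FF p q hpq c (c j : L) E + FF p q hpq c ⁅zb, (c j : L)⁆ (VB μ') := by
        rw [← hassemble]; abel
      rw [final]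
      apply Submodule.add_mem
      · -- FF (c j) E ∈ lowM (r+1) since E ∈ lowM r
        apply map_mem_of_support
        intro ν hν
        have hνcard : Multiset.card ν ≤ r := card_le_of_mem_lowM IH1 hν
        have h1 := ih (Multiset.card ν) (by omega) ν rfl (c j : L)
        have h2 : topMap p q hpq c ν (c j : L) ∈ lowM (K := K) (r+1) :=
          topMap_mem_lowM p q hpq c ν _ (by omega)
        have h3 := Submodule.add_mem _ (lowM_mono (by omega) h1) h2
        simpa using h3
      · -- bracket term
        have h1 := ih r (by omega) μ' hμ'card ⁅zb, (c j : L)⁆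
        have h2 : topMap p q hpq c μ' ⁅zb, (c j : L)⁆ ∈ lowM (K := K) (r+1) :=
          topMap_mem_lowM p q hpq c μ' _ (by omega)
        have h3 := Submodule.add_mem _ (lowM_mono (by omega) h1) h2
        simpa using h3

lemma topPart' (μ : Multiset ι) (z : L) :
    FF p q hpq c z (VB μ) - topMap p q hpq c μ z ∈ lowM (K := K) (Multiset.card μ) :=
  topPart p q hpq c (Multiset.card μ) μ rfl z

lemma FF_eq_topMap_add (μ : Multiset ι) (z : L) :
    FF p q hpq c z (VB μ) = topMap p q hpq c μ z
      + (FF p q hpq c z (VB μ) - topMap p q hpq c μ z) := by abel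

/-- the action raises degree by at most one -/
lemma FF_mem_lowM {s : ℕ} {v : Multiset ι →₀ K} (hv : v ∈ lowM (K := K) s) (w : L) :
    FF p q hpq c w v ∈ lowM (K := K) (s+1) := by
  apply map_mem_of_support
  intro ν hν
  have hc : Multiset.card ν ≤ s := card_le_of_mem_lowM hv hν
  have h1 := lowM_mono (show Multiset.card ν ≤ s+1 by omega) (topPart' p q hpq c ν w)
  have h2 : topMap p q hpq c ν w ∈ lowM (K := K) (s+1) :=
    topMap_mem_lowM p q hpq c ν _ (by omega)
  have h3 := Submodule.add_mem _ h1 h2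
  simpa using h3

/-- the easy case: adding a minimal letter -/
lemma FF_cheapCase (μ : Multiset ι) (i : ι) (hi : ∀ l ∈ μ, i ≤ l) :
    FF p q hpq c (c i : L) (VB μ) = VB (i ::ₘ μ) := by
  classical
  rcases eq_or_ne μ 0 with rfl | hne
  · rw [FF_vac, topMap, LinearMap.comp_apply, coords_eb, lsumTop_single]
    simp
  · set j := minOf μ hne with hj
    have hij : i ≤ j := hi j (minOf_mem hne)
    have hg : zGood p q hpq c j (c i : L) = (c i : L) := by
      rw [zGood]
      simp only [LinearMap.comp_apply, coords_eb, filterCoordsLe_apply]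
      rw [Finsupp.filter_single_of_pos (p := (· ≤ j)) (a := i) hij]
      simp
    have hb : zBad p q hpq c j (c i : L) = 0 := by
      rw [zBad, LinearMap.sub_apply, LinearMap.id_apply, hg, sub_self]
    rw [FF_step p q hpq c _ μ hne, ← hj, hb]
    rw [coords_eb, Finsupp.filter_single_of_pos (p := (· ≤ j)) (a := i) hij, lsumTop_single]
    simp [zero_lie]


/-- expand the action of a `good` combination of basis vectors -/
lemma lin_comb_apply {N : Type*} [AddCommGroup N] [Module K N]
    (T : L →ₗ[K] N) (u : ι →₀ K) :
    T (q.subtype (c.repr.symm u)) = u.sum fun l a => a • T (c l : L) := by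
  classical
  have h1 : (c.repr.symm u : q) = u.sum fun l a => a • c l := by
    rw [Module.Basis.repr_symm_apply, Finsupp.linearCombination_apply]
  rw [h1, map_finsuppSum, map_finsuppSum]
  apply Finsupp.sum_congr
  intro l _
  simp

lemma mem_support_filter {P : ι → Prop} [DecidablePred P] {u : ι →₀ K} {l : ι}
    (h : l ∈ (Finsupp.filter P u).support) : P l := by
  classical
  rw [Finsupp.support_filter] at h
  have := Finset.mem_filter.1 h
  exact this.2

lemma zGood_eq_comb (j : ι) (z : L) :
    zGood p q hpq c j z
      = q.subtype (c.repr.symm (Finsupp.filter (· ≤ j) (coords p q hpq c z))) := rfl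

/-- auxiliary straightening: `e_i` acting on `(l ::ₘ μ)` for `l ≤ i` minimal -/
lemma FF_aux (μ : Multiset ι) (i l : ι) (hi : ∀ x ∈ μ, i ≤ x) (hli : l ≤ i) :
    FF p q hpq c (c i : L) (VB (l ::ₘ μ))
      = VB (i ::ₘ l ::ₘ μ) + FF p q hpq c ⁅(c i : L), (c l : L)⁆ (VB μ) := by
  classical
  have hlμ : ∀ x ∈ μ, l ≤ x := fun x hx => le_trans hli (hi x hx)
  have hne : l ::ₘ μ ≠ 0 := cons_ne_zero' l μ
  have hmin : minOf (l ::ₘ μ) hne = l := minOf_cons l μ hlμ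
  have herase : (l ::ₘ μ).erase l = μ := Multiset.erase_cons_head l μ
  have hcard : Multiset.card (l ::ₘ μ) - 1 = Multiset.card μ := by
    simp
  rcases eq_or_lt_of_le hli with rfl | hlt
  · -- i = l
    have hg : zGood p q hpq c l (c l : L) = (c l : L) := by
      rw [zGood_eq_comb, coords_eb, Finsupp.filter_single_of_pos (p := (· ≤ l)) le_rfl]
      simp
    have hb : zBad p q hpq c l (c l : L) = 0 := by
      rw [zBad, LinearMap.sub_apply, LinearMap.id_apply, hg, sub_self]
    rw [FF_step p q hpq c _ _ hne]
    rw [hmin, herase, hb, hcard, coords_eb,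
      Finsupp.filter_single_of_pos (p := (· ≤ l)) le_rfl, lsumTop_single]
    simp [zero_lie]
  · -- l < i
    have hg : zGood p q hpq c l (c i : L) = 0 := by
      rw [zGood_eq_comb, coords_eb,
        Finsupp.filter_single_of_neg (p := (· ≤ l)) (by simpa using not_le.2 hlt)]
      simp
    have hb : zBad p q hpq c l (c i : L) = (c i : L) := by
      rw [zBad, LinearMap.sub_apply, LinearMap.id_apply, hg, sub_zero]
    rw [FF_step p q hpq c _ _ hne]
    rw [hmin, herase, hb, hcard, coords_eb,
      Finsupp.filter_single_of_neg (p := (· ≤ l)) (by simpa using not_le.2 hlt)]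
    rw [FF_cheapCase p q hpq c μ i hi]
    rw [highP_VB, if_neg (by simp), lowP_VB, if_neg (by simp), cheap_VB]
    rw [Multiset.cons_swap]
    simp

/-- Lemma B: the fundamental straightening law against a minimal letter. -/
lemma lawB (μ : Multiset ι) (i : ι) (hi : ∀ x ∈ μ, i ≤ x) (z : L) :
    FF p q hpq c z (VB (i ::ₘ μ))
      = FF p q hpq c (c i : L) (FF p q hpq c z (VB μ))
        + FF p q hpq c ⁅z, (c i : L)⁆ (VB μ) := by
  classical
  set r := Multiset.card μ with hr
  set u := coords p q hpq c z with hu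
  set ug := Finsupp.filter (· ≤ i) u with hug
  set ub := Finsupp.filter (fun l => ¬ l ≤ i) u with hub
  set zg := zGood p q hpq c i z with hzg
  set zb := zBad p q hpq c i z with hzb
  have hne : i ::ₘ μ ≠ 0 := cons_ne_zero' i μ
  have hmin : minOf (i ::ₘ μ) hne = i := minOf_cons i μ hi
  have herase : (i ::ₘ μ).erase i = μ := Multiset.erase_cons_head i μ
  have hcard : Multiset.card (i ::ₘ μ) - 1 = r := by simp [hr]
  -- the LHS via the recursion
  have hLHS : FF p q hpq c z (VB (i ::ₘ μ))
      = lsumTop (i ::ₘ μ) ug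
        + cheap i (highP r (FF p q hpq c zb (VB μ)))
        + FF p q hpq c (c i : L) (lowP r (FF p q hpq c zb (VB μ)))
        + FF p q hpq c ⁅zb, (c i : L)⁆ (VB μ) := by
    rw [FF_step p q hpq c _ _ hne, hmin, herase, hcard]
  -- high/low parts of `FF zb (VB μ)`
  set Eb := FF p q hpq c zb (VB μ) - topMap p q hpq c μ zb with hEb
  have hEbmem : Eb ∈ lowM (K := K) r := topPart' p q hpq c μ zb
  have hFFzb : FF p q hpq c zb (VB μ) = lsumTop μ ub + Eb := by
    rw [hEb, hub, ← coords_zBad p q hpq c i z, ← hzb]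
    rw [show lsumTop μ (coords p q hpq c zb) = topMap p q hpq c μ zb from rfl]
    abel
  have hhigh : highP r (FF p q hpq c zb (VB μ)) = lsumTop μ ub := by
    rw [hFFzb, map_add, highP_of_mem_lowM hEbmem, add_zero,
      highP_lsumTop _ _ (le_of_eq hr)]
  have hlow : lowP r (FF p q hpq c zb (VB μ)) = Eb := by
    rw [hFFzb, map_add, lowP_of_mem_lowM hEbmem, lowP_lsumTop _ _ (le_of_eq hr), zero_add]
  -- action of `c i` on the bad top part is `cheap i`
  have hbadtop : FF p q hpq c (c i : L) (lsumTop μ ub)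
      = cheap i (lsumTop μ ub) := by
    rw [lsumTop_apply', map_finsuppSum, map_finsuppSum]
    apply Finsupp.sum_congr
    intro l hl
    have hil : i ≤ l := by
      have hlmem : l ∈ (Finsupp.filter (fun l => ¬ l ≤ i) u).support := by
        rw [← hub]; exact hl
      exact le_of_not_ge (mem_support_filter (K := K) (P := fun l => ¬ l ≤ i) hlmem)
    rw [map_smul, map_smul, cheap_VB,
      FF_cheapCase p q hpq c (l ::ₘ μ) i
        (fun x hx => by rcases Multiset.mem_cons.1 hx with rfl | hx'
                        exacts [hil, hi x hx'])]
  -- action of `zg`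
  have hzg_sum : ∀ v : Multiset ι →₀ K, FF p q hpq c zg v
      = ug.sum fun l a => a • FF p q hpq c (c l : L) v := by
    intro v
    rw [hzg, show zGood p q hpq c i z
        = q.subtype (c.repr.symm ug) from rfl]
    exact lin_comb_apply (q := q) (c := c) ((FF p q hpq c).flip v) ug

  have hbrzg_sum : FF p q hpq c ⁅zg, (c i : L)⁆ (VB μ)
      = ug.sum fun l a => a • FF p q hpq c ⁅(c l : L), (c i : L)⁆ (VB μ) := by
    rw [hzg, show zGood p q hpq c i z = q.subtype (c.repr.symm ug) from rfl]
    exact lin_comb_apply (q := q) (c := c)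
      (((FF p q hpq c).flip (VB μ)) ∘ₗ adR ((c i : L))) ug
  -- action of `c i` on `FF zg (VB μ)`
  have hgood : FF p q hpq c (c i : L) (FF p q hpq c zg (VB μ))
      = lsumTop (i ::ₘ μ) ug
        + ug.sum fun l a => a • FF p q hpq c ⁅(c i : L), (c l : L)⁆ (VB μ) := by
    rw [hzg_sum (VB μ), map_finsuppSum]
    have hstep : ∀ l ∈ ug.support, ∀ a : K,
        FF p q hpq c (c i : L) (a • FF p q hpq c (c l : L) (VB μ))
        = a • (VB (l ::ₘ (i ::ₘ μ)) + FF p q hpq c ⁅(c i : L), (c l : L)⁆ (VB μ)) := by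
      intro l hl a
      have hli : l ≤ i := by
        have hlmem : l ∈ (Finsupp.filter (· ≤ i) u).support := by
          rw [← hug]; exact hl
        exact mem_support_filter (K := K) (P := (· ≤ i)) hlmem
      have hlμ : ∀ x ∈ μ, l ≤ x := fun x hx => le_trans hli (hi x hx)
      rw [map_smul, FF_cheapCase p q hpq c μ l hlμ, FF_aux p q hpq c μ i l hi hli,
        Multiset.cons_swap]
    rw [Finsupp.sum_congr (g2 := fun l a =>
      a • (VB (l ::ₘ (i ::ₘ μ)) + FF p q hpq c ⁅(c i : L), (c l : L)⁆ (VB μ)))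
      (fun l hl => hstep l hl _)]
    rw [lsumTop_apply']
    rw [← Finsupp.sum_add]
    apply Finsupp.sum_congr
    intro l _
    rw [smul_add]
  -- bracket cancellation
  have hzsplit : z = zg + zb := (zGood_add_zBad p q hpq c i z).symm
  have hcancel : (ug.sum fun l a => a • FF p q hpq c ⁅(c i : L), (c l : L)⁆ (VB μ))
      + FF p q hpq c ⁅zg, (c i : L)⁆ (VB μ) = 0 := by
    rw [hbrzg_sum, ← Finsupp.sum_add]
    rw [Finsupp.sum_congr (g2 := fun _ _ => (0 : Multiset ι →₀ K))]
    · simp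
    · intro l _
      have hsk : ⁅(c i : L), (c l : L)⁆ = -⁅(c l : L), (c i : L)⁆ := by
        rw [← lie_skew]
      rw [hsk, map_neg, LinearMap.neg_apply, smul_neg, neg_add_cancel]
  -- assemble the RHS
  have hRHS : FF p q hpq c (c i : L) (FF p q hpq c z (VB μ))
        + FF p q hpq c ⁅z, (c i : L)⁆ (VB μ)
      = lsumTop (i ::ₘ μ) ug
        + cheap i (lsumTop μ ub)
        + FF p q hpq c (c i : L) Eb
        + FF p q hpq c ⁅zb, (c i : L)⁆ (VB μ) := by
    have e1 : FF p q hpq c z (VB μ)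
        = FF p q hpq c zg (VB μ) + lsumTop μ ub + Eb := by
      nth_rewrite 1 [hzsplit]
      rw [map_add, LinearMap.add_apply, hFFzb]
      abel
    have e2 : FF p q hpq c ⁅z, (c i : L)⁆ (VB μ)
        = FF p q hpq c ⁅zg, (c i : L)⁆ (VB μ)
          + FF p q hpq c ⁅zb, (c i : L)⁆ (VB μ) := by
      nth_rewrite 1 [hzsplit]
      rw [add_lie, map_add, LinearMap.add_apply]
    rw [e1, e2, map_add, map_add, hgood, hbadtop]
    rw [← sub_eq_zero, ← hcancel]
    abel
  rw [hLHS, hRHS, hhigh, hlow]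


lemma fsum_zero {u : ι →₀ K} {g : ι → K → Multiset ι →₀ K}
    (h : ∀ l ∈ u.support, g l (u l) = 0) : u.sum g = 0 := by
  rw [Finsupp.sum]
  exact Finset.sum_eq_zero h

/-- the defect of the Lie module law -/
def DD (z w : L) : (Multiset ι →₀ K) →ₗ[K] (Multiset ι →₀ K) :=
  (FF p q hpq c z) ∘ₗ (FF p q hpq c w) - (FF p q hpq c w) ∘ₗ (FF p q hpq c z)
    - FF p q hpq c ⁅z, w⁆

lemma DD_apply (z w : L) (v : Multiset ι →₀ K) :
    DD p q hpq c z w v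
      = FF p q hpq c z (FF p q hpq c w v) - FF p q hpq c w (FF p q hpq c z v)
        - FF p q hpq c ⁅z, w⁆ v := rfl

lemma DD_skew_apply (z w : L) (v : Multiset ι →₀ K) :
    DD p q hpq c z w v = - DD p q hpq c w z v := by
  have h : ⁅w, z⁆ = -⁅z, w⁆ := by rw [← lie_skew]
  rw [DD_apply, DD_apply, h, map_neg]
  simp only [LinearMap.neg_apply]
  abel

lemma DD_add_right (z w₁ w₂ : L) (v : Multiset ι →₀ K) :
    DD p q hpq c z (w₁ + w₂) v = DD p q hpq c z w₁ v + DD p q hpq c z w₂ v := by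
  simp only [DD_apply, map_add, lie_add, LinearMap.add_apply]
  abel

lemma DD_add_left (z₁ z₂ w : L) (v : Multiset ι →₀ K) :
    DD p q hpq c (z₁ + z₂) w v = DD p q hpq c z₁ w v + DD p q hpq c z₂ w v := by
  rw [DD_skew_apply, DD_add_right, DD_skew_apply p q hpq c w z₁,
    DD_skew_apply p q hpq c w z₂]
  abel

/-- expansion of `DD` in the first slot over a combination of basis vectors -/
lemma DD_comb_left (w : L) (v : Multiset ι →₀ K) (u : ι →₀ K) :
    DD p q hpq c (q.subtype (c.repr.symm u)) w v
      = u.sum fun l a => a • DD p q hpq c (c l : L) w v := by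
  have hT : ∀ y : L, DD p q hpq c y w v
      = (((FF p q hpq c).flip (FF p q hpq c w v))
          - ((FF p q hpq c w) ∘ₗ ((FF p q hpq c).flip v))
          - (((FF p q hpq c).flip v) ∘ₗ (adR w))) y := by
    intro y
    simp only [DD_apply, LinearMap.sub_apply, LinearMap.comp_apply,
      LinearMap.flip_apply, adR_apply]
  rw [hT, lin_comb_apply (q := q) (c := c)]
  apply Finsupp.sum_congr
  intro l _
  rw [← hT]

lemma DD_comb_right (z : L) (v : Multiset ι →₀ K) (u : ι →₀ K) :
    DD p q hpq c z (q.subtype (c.repr.symm u)) v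
      = u.sum fun l a => a • DD p q hpq c z (c l : L) v := by
  rw [DD_skew_apply, DD_comb_left]
  rw [← Finsupp.sum_neg]
  apply Finsupp.sum_congr
  intro l _
  rw [DD_skew_apply]
  simp

/-- `DD` vanishes against a single basis vector compatible with the monomial -/
lemma DD_basis_right (μ : Multiset ι) (i : ι) (hi : ∀ x ∈ μ, i ≤ x) (z : L) :
    DD p q hpq c z (c i : L) (VB μ) = 0 := by
  rw [DD_apply, FF_cheapCase p q hpq c μ i hi, lawB p q hpq c μ i hi z]
  abel

lemma DD_basis_left (μ : Multiset ι) (i : ι) (hi : ∀ x ∈ μ, i ≤ x) (w : L) :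
    DD p q hpq c (c i : L) w (VB μ) = 0 := by
  rw [DD_skew_apply, DD_basis_right p q hpq c μ i hi w, neg_zero]

lemma projQ_eq_symm_coords (z : L) :
    q.subtype (c.repr.symm (coords p q hpq c z)) = (projQ p q hpq z : L) := by
  rw [coords]
  simp

lemma pPart_mem (z : L) : z - (projQ p q hpq z : L) ∈ p := by
  have h := (show ((p.projectionOnto q hpq z : L) + (q.projectionOnto p hpq.symm z : L) = z) from Submodule.projection_add_projection_eq_self hpq z)
  have h2 : z - (projQ p q hpq z : L) = (p.projectionOnto q hpq z : L) := by
    rw [projQ]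
    have h3 : z = ((q.projectionOnto p hpq.symm) z : L)
        + ((p.projectionOnto q hpq) z : L) := by
      rw [add_comm]
      exact h.symm
    exact sub_eq_of_eq_add' h3
  rw [h2]
  exact (p.projectionOnto q hpq z).2

lemma FF_vac_p {a : L} (ha : a ∈ p) : FF p q hpq c a (VB 0) = 0 := by
  rw [FF_vac, topMap, LinearMap.comp_apply, coords_p p q hpq c a ha, map_zero]

/-- the master theorem: `FF` satisfies the Lie module law -/
theorem lawAll (hp : ∀ a ∈ p, ∀ b ∈ p, ⁅a, b⁆ ∈ p) :
    ∀ (d : ℕ) (μ : Multiset ι), Multiset.card μ = d → ∀ z w : L,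
      DD p q hpq c z w (VB μ) = 0 := by
  intro d
  induction d using Nat.strong_induction_on with
  | _ d ih =>
    intro μ hμcard z w
    -- decompositions of z and w
    rcases d with _ | r
    · -- base case : the vacuum
      have hμ0 : μ = 0 := Multiset.card_eq_zero.1 hμcard
      subst hμ0
      have hbasisR : ∀ (z' : L) (l : ι), DD p q hpq c z' (c l : L) (VB 0) = 0 :=
        fun z' l => DD_basis_right p q hpq c 0 l (by simp) z'
      have hcombR : ∀ z' : L,
          DD p q hpq c z' ((projQ p q hpq w : L)) (VB 0) = 0 := by
        intro z'
        rw [← projQ_eq_symm_coords p q hpq c w, DD_comb_right]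
        apply fsum_zero
        intro l _
        rw [hbasisR z' l, smul_zero]
      have hww : w = (w - (projQ p q hpq w : L)) + (projQ p q hpq w : L) := by abel
      have hzz : z = (z - (projQ p q hpq z : L)) + (projQ p q hpq z : L) := by abel
      rw [hww, DD_add_right, hcombR z, add_zero]
      set wp := w - (projQ p q hpq w : L) with hwp
      have hwpmem : wp ∈ p := pPart_mem p q hpq w
      rw [hzz, DD_add_left]
      have hq0 : DD p q hpq c ((projQ p q hpq z : L)) wp (VB 0) = 0 := by
        rw [← projQ_eq_symm_coords p q hpq c z, DD_comb_left]
        apply fsum_zero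
        intro l _
        rw [DD_skew_apply, hbasisR wp l, neg_zero, smul_zero]
      rw [hq0, add_zero]
      -- both in p
      set zp := z - (projQ p q hpq z : L) with hzp
      have hzpmem : zp ∈ p := pPart_mem p q hpq z
      rw [DD_apply, FF_vac_p p q hpq c hwpmem, FF_vac_p p q hpq c hzpmem,
        FF_vac_p p q hpq c (hp _ hzpmem _ hwpmem), map_zero, map_zero]
      abel
    · -- inductive step
      have hne : μ ≠ 0 := by
        intro h0
        rw [h0] at hμcard
        simp at hμcard
      set j := minOf μ hne with hj
      set μ' := μ.erase j with hμ'
      have hjmem : j ∈ μ := minOf_mem hne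
      have hcons : j ::ₘ μ' = μ := Multiset.cons_erase hjmem
      have hμ'card : Multiset.card μ' = r := by
        rw [hμ', Multiset.card_erase_of_mem hjmem, hμcard]
        rfl
      have hjle : ∀ x ∈ μ', j ≤ x := fun x hx =>
        minOf_le hne (Multiset.mem_of_mem_erase hx)
      have hjleμ : ∀ x ∈ μ, j ≤ x := fun x hx => minOf_le hne hx
      -- IH instances
      have ihμ' : ∀ z' w' : L, FF p q hpq c z' (FF p q hpq c w' (VB μ'))
          - FF p q hpq c w' (FF p q hpq c z' (VB μ'))
          = FF p q hpq c ⁅z', w'⁆ (VB μ') := by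
        intro z' w'
        have h := ih r (by omega) μ' hμ'card z' w'
        rw [DD_apply, sub_eq_zero] at h
        exact h
      have ih_low : ∀ v ∈ lowM (K := K) r, ∀ z' w' : L,
          DD p q hpq c z' w' v = 0 := by
        intro v hv z' w'
        have h0 := ext_on_support (DD p q hpq c z' w') 0 v (fun ν hν => by
          rw [ih (Multiset.card ν) (by
              have := card_le_of_mem_lowM hv hν
              omega) ν rfl z' w']
          simp)
        simpa using h0
      -- good parts are handled by `lawB`
      have hgoodR : ∀ z' w' : L, DD p q hpq c z' (zGood p q hpq c j w') (VB μ) = 0 := by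
        intro z' w'
        rw [zGood_eq_comb, DD_comb_right]
        apply fsum_zero
        intro l hl
        have hli : l ≤ j := mem_support_filter (K := K) (P := (· ≤ j)) hl
        rw [DD_basis_right p q hpq c μ l (fun x hx => le_trans hli (hjleμ x hx)) z',
          smul_zero]
      -- the main (bad-bad) case
      have hmain : ∀ z' w' : L,
          (∀ l ∈ (coords p q hpq c z').support, ¬ l ≤ j) →
          (∀ l ∈ (coords p q hpq c w').support, ¬ l ≤ j) →
          DD p q hpq c z' w' (VB μ) = 0 := by
        intro z' w' hz' hw'
        -- commuting past `c j` on `FF y (VB μ')`-type vectors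
        have hcomm : ∀ y : L, (∀ l ∈ (coords p q hpq c y).support, ¬ l ≤ j) →
            ∀ y' : L, FF p q hpq c y' (FF p q hpq c (c j : L) (FF p q hpq c y (VB μ')))
              = FF p q hpq c (c j : L) (FF p q hpq c y' (FF p q hpq c y (VB μ')))
                + FF p q hpq c ⁅y', (c j : L)⁆ (FF p q hpq c y (VB μ')) := by
          intro y hy y'
          have hDD : DD p q hpq c y' (c j : L) (FF p q hpq c y (VB μ')) = 0 := by
            have hsplit : FF p q hpq c y (VB μ')
                = topMap p q hpq c μ' y
                  + (FF p q hpq c y (VB μ') - topMap p q hpq c μ' y) := by abel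
            rw [hsplit, map_add]
            have h1 : DD p q hpq c y' (c j : L) (topMap p q hpq c μ' y) = 0 := by
              rw [topMap, LinearMap.comp_apply, lsumTop_apply', map_finsuppSum]
              apply fsum_zero
              intro l hl
              rw [map_smul]
              have hcond : ∀ x ∈ (l ::ₘ μ'), j ≤ x := by
                intro x hx
                rcases Multiset.mem_cons.1 hx with h' | hx'
                · rw [h']
                  exact le_of_not_ge (hy l hl)
                · exact hjle x hx'
              rw [DD_basis_right p q hpq c (l ::ₘ μ') j hcond y', smul_zero]
            have h2 : DD p q hpq c y' (c j : L)
                (FF p q hpq c y (VB μ') - topMap p q hpq c μ' y) = 0 :=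
              ih_low _ (hμ'card ▸ topPart' p q hpq c μ' y) y' (c j : L)
            rw [h1, h2, add_zero]
          rw [DD_apply, sub_eq_zero] at hDD
          rw [sub_eq_iff_eq_add] at hDD
          rw [hDD]
          abel
        -- expand both big terms
        have hBz : FF p q hpq c z' (VB μ)
            = FF p q hpq c (c j : L) (FF p q hpq c z' (VB μ'))
              + FF p q hpq c ⁅z', (c j : L)⁆ (VB μ') := by
          rw [← hcons, lawB p q hpq c μ' j hjle z']
        have hBw : FF p q hpq c w' (VB μ)
            = FF p q hpq c (c j : L) (FF p q hpq c w' (VB μ'))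
              + FF p q hpq c ⁅w', (c j : L)⁆ (VB μ') := by
          rw [← hcons, lawB p q hpq c μ' j hjle w']
        have hBzw : FF p q hpq c ⁅z', w'⁆ (VB μ)
            = FF p q hpq c (c j : L) (FF p q hpq c ⁅z', w'⁆ (VB μ'))
              + FF p q hpq c ⁅⁅z', w'⁆, (c j : L)⁆ (VB μ') := by
          rw [← hcons, lawB p q hpq c μ' j hjle ⁅z', w'⁆]
        have hjac : ⁅⁅z', w'⁆, (c j : L)⁆
            = ⁅⁅z', (c j : L)⁆, w'⁆ + ⁅z', ⁅w', (c j : L)⁆⁆ := by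
          rw [lie_lie]
          rw [show ⁅⁅z', (c j : L)⁆, w'⁆ = -⁅w', ⁅z', (c j : L)⁆⁆ from (lie_skew _ _).symm]
          abel
        -- the IH at μ' on the three pairs
        have iA := ihμ' z' w'
        have iB := ihμ' ⁅z', (c j : L)⁆ w'
        have iC := ihμ' z' ⁅w', (c j : L)⁆
        rw [sub_eq_iff_eq_add] at iA iB iC
        have k1 : FF p q hpq c (c j : L)
              (FF p q hpq c z' (FF p q hpq c w' (VB μ')))
            = FF p q hpq c (c j : L) (FF p q hpq c ⁅z', w'⁆ (VB μ'))
              + FF p q hpq c (c j : L)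
                (FF p q hpq c w' (FF p q hpq c z' (VB μ'))) := by
          rw [← map_add, ← iA]
        rw [DD_apply, hBz, hBw, hBzw, hjac]
        simp only [map_add, LinearMap.add_apply]
        rw [hcomm w' hw' z', hcomm z' hz' w']
        rw [k1, iB, iC]
        abel
      -- assemble: split z and w into good and bad parts
      have hzsplit : z = zGood p q hpq c j z + zBad p q hpq c j z :=
        (zGood_add_zBad p q hpq c j z).symm
      have hwsplit : w = zGood p q hpq c j w + zBad p q hpq c j w :=
        (zGood_add_zBad p q hpq c j w).symm
      have hbadsupp : ∀ y : L, ∀ l ∈ (coords p q hpq c (zBad p q hpq c j y)).support,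
          ¬ l ≤ j := by
        intro y l hl
        rw [coords_zBad] at hl
        exact mem_support_filter (K := K) (P := fun i => ¬ i ≤ j) hl
      rw [hwsplit, DD_add_right, hgoodR z w, zero_add]
      nth_rewrite 1 [hzsplit]
      rw [DD_add_left]
      have hgoodL : DD p q hpq c (zGood p q hpq c j z) (zBad p q hpq c j w) (VB μ) = 0 := by
        rw [DD_skew_apply, hgoodR (zBad p q hpq c j w) z, neg_zero]
      rw [hgoodL, zero_add]
      exact hmain _ _ (hbadsupp z) (hbadsupp w)


lemma lsumTop_eq_mapDomain (μ : Multiset ι) (u : ι →₀ K) :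
    lsumTop μ u = Finsupp.mapDomain (fun i => i ::ₘ μ) u := by
  classical
  rw [lsumTop_apply', Finsupp.mapDomain]
  apply Finsupp.sum_congr
  intro i _
  rw [VB, Finsupp.smul_single, smul_eq_mul, mul_one]

lemma topMap_vac_ne_zero (x : L) (hx : x ∉ p) :
    topMap p q hpq c (0 : Multiset ι) x ≠ 0 := by
  classical
  have hproj : (projQ p q hpq x : L) ≠ 0 := by
    intro h0
    apply hx
    have h := (show ((p.projectionOnto q hpq x : L) + (q.projectionOnto p hpq.symm x : L) = x) from Submodule.projection_add_projection_eq_self hpq x)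
    have h0' : ((q.projectionOnto p hpq.symm) x : L) = 0 := h0
    rw [h0', add_zero] at h
    have hx2 : x = (p.projectionOnto q hpq x : L) := h.symm
    rw [hx2]
    exact (p.projectionOnto q hpq x).2
  have hcoords : coords p q hpq c x ≠ 0 := by
    intro h0
    apply hproj
    have : c.repr (projQ p q hpq x) = 0 := h0
    have h2 := congrArg c.repr.symm this
    rw [LinearEquiv.symm_apply_apply, map_zero] at h2
    exact congrArg _ h2
  rw [topMap, LinearMap.comp_apply, lsumTop_eq_mapDomain]
  intro h0
  apply hcoords
  have hinj : Function.Injective (fun i : ι => i ::ₘ (0 : Multiset ι)) := by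
    intro a b hab
    simpa [Multiset.cons_zero, Multiset.singleton_inj] using hab
  exact Finsupp.mapDomain_injective hinj (by simpa using h0)

end mainprops

attribute [local instance 100] LieRing.ofAssociativeRing

/-- The separating representation: if `p` is a subalgebra-closed submodule and
`x ∉ p`, then `ι x` is not in the left ideal of `U(L)` generated by `ι(p)`. -/
theorem sep_span (p : Submodule K L) (hp : ∀ a ∈ p, ∀ b ∈ p, ⁅a, b⁆ ∈ p)
    (x : L) (hx : x ∉ p) :
    UniversalEnvelopingAlgebra.ι K x ∉
      Submodule.span (UniversalEnvelopingAlgebra K L)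
        (UniversalEnvelopingAlgebra.ι K '' (p : Set L)) := by
  classical
  obtain ⟨q, hq⟩ := Submodule.exists_isCompl p
  letI : LinearOrder (Module.Basis.ofVectorSpaceIndex K q) :=
    @linearOrderOfSTO _ WellOrderingRel
      (by haveI := WellOrderingRel.isWellOrder (α := (Module.Basis.ofVectorSpaceIndex K q)); infer_instance) (Classical.decRel _)
  set c := Module.Basis.ofVectorSpace K q with hc
  -- the Lie algebra morphism
  have hlaw : ∀ z w : L, FF p q hq c ⁅z, w⁆
      = FF p q hq c z ∘ₗ FF p q hq c w - FF p q hq c w ∘ₗ FF p q hq c z := by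
    intro z w
    apply LinearMap.ext
    intro v
    have h : ∀ μ ∈ v.support, FF p q hq c ⁅z, w⁆ (VB μ)
        = (FF p q hq c z ∘ₗ FF p q hq c w - FF p q hq c w ∘ₗ FF p q hq c z) (VB μ) := by
      intro μ _
      have h0 := lawAll p q hq c hp (Multiset.card μ) μ rfl z w
      rw [DD_apply, sub_sub, sub_eq_zero] at h0
      simp only [LinearMap.sub_apply, LinearMap.comp_apply]
      rw [eq_sub_iff_add_eq, add_comm]
      exact h0.symm
    exact ext_on_support _ _ v h
  let ρ : L →ₗ⁅K⁆ Module.End K (Multiset (Module.Basis.ofVectorSpaceIndex K q) →₀ K) :=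
    { toLinearMap := FF p q hq c
      map_lie' := by
        intro z w
        show FF p q hq c ⁅z, w⁆ = ⁅FF p q hq c z, FF p q hq c w⁆
        rw [hlaw z w]
        exact rfl }
  have hρ : ∀ z : L, ρ z = FF p q hq c z := fun _ => rfl
  set Φ := UniversalEnvelopingAlgebra.lift K ρ with hΦ
  intro hmem
  have hT : ∀ u ∈ Submodule.span (UniversalEnvelopingAlgebra K L)
      (UniversalEnvelopingAlgebra.ι K '' (p : Set L)),
      Φ u (VB 0) = (0 : Multiset (Module.Basis.ofVectorSpaceIndex K q) →₀ K) := by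
    intro u hu
    induction hu using Submodule.span_induction with
    | mem u hu =>
      obtain ⟨a, ha, rfl⟩ := hu
      rw [UniversalEnvelopingAlgebra.lift_ι_apply, hρ, FF_vac_p p q hq c ha]
    | zero => simp
    | add u v _ _ hu hv => rw [map_add, LinearMap.add_apply, hu, hv, add_zero]
    | smul r u _ hu =>
      rw [smul_eq_mul, map_mul, Module.End.mul_apply, hu, map_zero]
  have hzero := hT _ hmem
  rw [UniversalEnvelopingAlgebra.lift_ι_apply, hρ, FF_vac] at hzero
  exact topMap_vac_ne_zero p q hq c x hx hzero

end PBWVerma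

section Application

/-- `comp` is a weak `ℤ`-grading of the Lie algebra `L`: `L = ⊕ₙ Lₙ` with
`⁅Lₙ, Lₘ⁆ ⊆ L_{n+m}`, with no finiteness assumption on the components. -/
def IsWeakZGradedLie (K L : Type*) [Field K] [LieRing L] [LieAlgebra K L]
    (comp : ℤ → Submodule K L) : Prop :=
  DirectSum.IsInternal comp ∧
    ∀ n m : ℤ, ∀ x ∈ comp n, ∀ y ∈ comp m, ⁅x, y⁆ ∈ comp (n + m)

/-- Let `L` be a weakly `ℤ`-graded Lie algebra over a field of characteristic zero
such that `U(L)` is left Noetherian.  Then `Lₙ` is finite-dimensional for every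
`n ≠ 0`. -/
theorem weakGraded_components_finiteDimensional
    (K : Type*) [Field K] [CharZero K]
    (L : Type*) [LieRing L] [LieAlgebra K L]
    (comp : ℤ → Submodule K L) (hgr : IsWeakZGradedLie K L comp)
    (hNoeth : IsNoetherianRing (UniversalEnvelopingAlgebra K L)) :
    ∀ n : ℤ, n ≠ 0 → FiniteDimensional K (comp n) := by
  classical
  intro n hn
  by_contra hfin
  obtain ⟨hint, hbr⟩ := hgr
  have hindep := hint.submodule_iSupIndep
  -- an infinite linearly independent family inside `comp n`
  set b := Module.Basis.ofVectorSpace K (comp n) with hb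
  haveI : Infinite (Module.Basis.ofVectorSpaceIndex K (comp n)) := by
    by_contra hinf
    haveI : Finite (Module.Basis.ofVectorSpaceIndex K (comp n)) := not_infinite_iff_finite.mp hinf
    exact hfin (Module.Finite.of_basis b)
  set e := Infinite.natEmbedding (Module.Basis.ofVectorSpaceIndex K (comp n)) with he
  set x : ℕ → L := fun k => ((b (e k) : comp n) : L) with hx
  have hxmem : ∀ k, x k ∈ comp n := fun k => (b (e k)).2
  have hxli : LinearIndependent K x := by
    have h2 := b.linearIndependent.comp e e.injective
    have h3 := h2.map' (comp n).subtype (Submodule.ker_subtype _)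
    exact h3
  -- the higher graded part
  set B : Submodule K L := ⨆ (j : {m : ℕ // 2 ≤ m}), comp ((j : ℤ) * n) with hB
  have hcompB : ∀ (j : ℕ), 2 ≤ j → comp ((j : ℤ) * n) ≤ B := fun j hj =>
    le_iSup (fun j : {m : ℕ // 2 ≤ m} => comp ((j : ℤ) * n)) ⟨j, hj⟩
  have hlem1 : ∀ a ∈ comp n, ∀ bb ∈ B, ⁅a, bb⁆ ∈ B := by
    intro a ha bb hbb
    refine Submodule.iSup_induction (motive := fun y => ⁅a, y⁆ ∈ B) _ hbb ?_ ?_ ?_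
    · rintro ⟨j, hj⟩ y hy
      have h1 := hbr n ((j : ℤ) * n) a ha y hy
      have hc : n + (j : ℤ) * n = ((j + 1 : ℕ) : ℤ) * n := by push_cast; ring
      exact hcompB (j + 1) (by omega) (hc ▸ h1)
    · show ⁅a, (0 : L)⁆ ∈ B
      rw [lie_zero]; exact B.zero_mem
    · intro y1 y2 h1 h2
      show ⁅a, y1 + y2⁆ ∈ B
      rw [lie_add]; exact B.add_mem h1 h2
  have hlem2 : ∀ aa ∈ B, ∀ bb ∈ B, ⁅aa, bb⁆ ∈ B := by
    intro aa haa
    refine Submodule.iSup_induction (motive := fun y => ∀ bb ∈ B, ⁅y, bb⁆ ∈ B) _ haa ?_ ?_ ?_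
    · rintro ⟨j, hj⟩ y hy bb hbb
      refine Submodule.iSup_induction (motive := fun w => ⁅y, w⁆ ∈ B) _ hbb ?_ ?_ ?_
      · rintro ⟨k, hk⟩ w hw
        have h1 := hbr ((j : ℤ) * n) ((k : ℤ) * n) y hy w hw
        have hc : (j : ℤ) * n + (k : ℤ) * n = ((j + k : ℕ) : ℤ) * n := by push_cast; ring
        exact hcompB (j + k) (by omega) (hc ▸ h1)
      · show ⁅y, (0 : L)⁆ ∈ B
        rw [lie_zero]; exact B.zero_mem
      · intro w1 w2 h1 h2
        show ⁅y, w1 + w2⁆ ∈ B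
        rw [lie_add]; exact B.add_mem h1 h2
    · intro bb hbb
      show ⁅(0 : L), bb⁆ ∈ B
      rw [zero_lie]; exact B.zero_mem
    · intro y1 y2 h1 h2 bb hbb
      show ⁅y1 + y2, bb⁆ ∈ B
      rw [add_lie]; exact B.add_mem (h1 bb hbb) (h2 bb hbb)
  -- `comp n` and `B` are disjoint
  have hdisj : Disjoint (comp n) B := by
    have h1 : B ≤ ⨆ m ∈ {m : ℤ | m ≠ n}, comp m := by
      apply iSup_le
      rintro ⟨j, hj⟩
      have hne : (j : ℤ) * n ≠ n := by
        intro h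
        have h2 : ((j : ℤ) - 1) * n = 0 := by linarith [h]
        rcases mul_eq_zero.1 h2 with h3 | h3
        · have : (j : ℤ) = 1 := by omega
          omega
        · exact hn h3
      exact le_biSup _ hne
    exact Disjoint.mono_right h1 (hindep.disjoint_biSup (by simp))
  -- the subalgebras `P k`
  set P : ℕ → Submodule K L := fun k => (Submodule.span K (x '' Set.Iio k)) ⊔ B with hP
  have hspan_le : ∀ k, Submodule.span K (x '' Set.Iio k) ≤ comp n := fun k =>
    Submodule.span_le.2 (by rintro _ ⟨t, _, rfl⟩; exact hxmem t)
  have hPsub : ∀ k, ∀ a ∈ P k, ∀ bb ∈ P k, ⁅a, bb⁆ ∈ P k := by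
    intro k a ha bb hbb
    have hPle : P k ≤ comp n ⊔ B := sup_le_sup_right (hspan_le k) B
    obtain ⟨a1, ha1, a2, ha2, hasum⟩ := Submodule.mem_sup.1 (hPle ha)
    obtain ⟨b1, hb1, b2, hb2, hbsum⟩ := Submodule.mem_sup.1 (hPle hbb)
    have h11 : ⁅a1, b1⁆ ∈ B := by
      have h1 := hbr n n a1 ha1 b1 hb1
      have hc : n + n = ((2 : ℕ) : ℤ) * n := by push_cast; ring
      exact hcompB 2 le_rfl (hc ▸ h1)
    have h12 : ⁅a1, b2⁆ ∈ B := hlem1 a1 ha1 b2 hb2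
    have h21 : ⁅a2, b1⁆ ∈ B := by
      have h1 := hlem1 b1 hb1 a2 ha2
      rw [show ⁅a2, b1⁆ = -⁅b1, a2⁆ from (lie_skew _ _).symm]
      exact B.neg_mem h1
    have h22 : ⁅a2, b2⁆ ∈ B := hlem2 a2 ha2 b2 hb2
    have hfinal : ⁅a, bb⁆ ∈ B := by
      rw [← hasum, ← hbsum, add_lie, lie_add, lie_add]
      exact B.add_mem (B.add_mem h11 h12) (B.add_mem h21 h22)
    exact le_sup_right (a := Submodule.span K (x '' Set.Iio k)) hfinal
  have hnot : ∀ k, x k ∉ P k := by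
    intro k hk
    obtain ⟨s, hs, bb, hbb, hsum⟩ := Submodule.mem_sup.1 hk
    have hbb' : bb ∈ comp n := by
      have h1 : bb = x k - s := by rw [← hsum]; abel
      rw [h1]
      exact Submodule.sub_mem _ (hxmem k) (hspan_le k hs)
    have hbb0 : bb = 0 := by
      have h1 := hdisj.le_bot (Submodule.mem_inf.2 ⟨hbb', hbb⟩)
      simpa using h1
    rw [hbb0, add_zero] at hsum
    have h2 : x k ∈ Submodule.span K (x '' Set.Iio k) := hsum ▸ hs
    exact hxli.notMem_span_image (by simp : (k : ℕ) ∉ Set.Iio k) h2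
  -- the increasing chain of left ideals
  haveI hNoe : IsNoetherian (UniversalEnvelopingAlgebra K L) (UniversalEnvelopingAlgebra K L) :=
    isNoetherianRing_iff.mp hNoeth
  have hmono : Monotone (fun k => Submodule.span (UniversalEnvelopingAlgebra K L)
      (UniversalEnvelopingAlgebra.ι K '' (x '' Set.Iio k))) := by
    intro k1 k2 hk
    apply Submodule.span_mono
    apply Set.image_mono
    apply Set.image_mono
    intro t ht
    exact lt_of_lt_of_le ht hk
  set J : ℕ →o Submodule (UniversalEnvelopingAlgebra K L) (UniversalEnvelopingAlgebra K L) :=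
    ⟨fun k => Submodule.span (UniversalEnvelopingAlgebra K L)
      (UniversalEnvelopingAlgebra.ι K '' (x '' Set.Iio k)), hmono⟩ with hJ
  obtain ⟨k0, hk0⟩ := monotone_stabilizes_iff_noetherian.mpr hNoe J
  have hgen : UniversalEnvelopingAlgebra.ι K (x k0) ∈ J (k0 + 1) :=
    Submodule.subset_span ⟨x k0, ⟨k0, by simp, rfl⟩, rfl⟩
  have heq : J (k0 + 1) = J k0 := (hk0 (k0 + 1) (by omega)).symm
  rw [heq] at hgen
  have hle : (J k0 : Submodule _ _) ≤ Submodule.span (UniversalEnvelopingAlgebra K L)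
      (UniversalEnvelopingAlgebra.ι K '' ((P k0 : Set L))) := by
    apply Submodule.span_mono
    apply Set.image_mono
    rintro _ ⟨t, ht, rfl⟩
    exact le_sup_left (a := Submodule.span K (x '' Set.Iio k0)) (b := B)
      (Submodule.subset_span ⟨t, ht, rfl⟩)
  exact sep_span (P k0) (hPsub k0) (x k0) (hnot k0) (hle hgen)

end Application
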